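/- For every N ≥ 2, the set S_N \ {id} can be written as a disjoint union of blocks, each block being either a singleton {σ} where σ satisfies: some entry β appears in position β+1 with all following entries greater than β; or a pair {σ, σ'} where σ and σ' differ only by interchanging two adjacent entries α, β and there is an entry γ appearing to the right of both with γ < α and γ < β. -/

import Mathlib

/-- σ satisfies the "singleton" condition: some entry b appears at position b + 1
(zero-based version of "β appears in position β+1") and all entries following b
are greater than b. -/
def SingleType {N : ℕ} (σ : Equiv.Perm (Fin N)) : Prop :=
  ∃ p b : Fin N, (p : ℕ) = (b : ℕ) + 1 ∧ σ p = b ∧ ∀ k, p < k → b < σ k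

/-- σ and σ' differ only by interchanging two adjacent entries (at positions i, i+1),
and some entry γ appears at a position to the right of both which is smaller than
both interchanged entries. -/
def PairType {N : ℕ} (σ σ' : Equiv.Perm (Fin N)) : Prop :=
  ∃ i i' j : Fin N, (i' : ℕ) = (i : ℕ) + 1 ∧ σ' = σ * Equiv.swap i i' ∧
    (i' : ℕ) < (j : ℕ) ∧ σ j < σ i ∧ σ j < σ i'

namespace PermPartitionAux

variable {N : ℕ}

/-- positions n, n+1 hold entries that both exceed some later entry. -/
def Valid (σ : Equiv.Perm (Fin N)) (n : ℕ) : Prop :=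
  ∃ a b j : Fin N, (a : ℕ) = n ∧ (b : ℕ) = n + 1 ∧ (b : ℕ) < (j : ℕ) ∧
    σ j < σ a ∧ σ j < σ b

lemma Valid.bound {σ : Equiv.Perm (Fin N)} {n : ℕ} (h : Valid σ n) : n + 1 < N := by
  obtain ⟨a, b, j, ha, hb, _⟩ := h
  have := b.isLt; omega

instance (σ : Equiv.Perm (Fin N)) : DecidablePred (Valid σ) := fun _ => by
  unfold Valid; infer_instance

instance (σ : Equiv.Perm (Fin N)) : Decidable (∃ n, Valid σ n) :=
  decidable_of_iff (∃ n, n < N ∧ Valid σ n) (by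
    constructor
    · rintro ⟨n, -, hv⟩; exact ⟨n, hv⟩
    · rintro ⟨n, hv⟩; exact ⟨n, by have := hv.bound; omega, hv⟩)

/-- the pairing function: swap at the leftmost valid position, if any. -/
noncomputable def pf (σ : Equiv.Perm (Fin N)) : Equiv.Perm (Fin N) :=
  if h : ∃ n, Valid σ n then
    σ * Equiv.swap ⟨Nat.find h, by have := (Nat.find_spec h).bound; omega⟩
        ⟨Nat.find h + 1, (Nat.find_spec h).bound⟩
  else σ

lemma pf_eq {σ : Equiv.Perm (Fin N)} (h : ∃ n, Valid σ n) {i₀ i₁ : Fin N}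
    (h₀ : (i₀ : ℕ) = Nat.find h) (h₁ : (i₁ : ℕ) = Nat.find h + 1) :
    pf σ = σ * Equiv.swap i₀ i₁ := by
  rcases i₀ with ⟨v0, l0⟩
  rcases i₁ with ⟨v1, l1⟩
  simp only [Fin.val_mk] at h₀ h₁
  subst h₀; subst h₁
  rw [pf, dif_pos h]

lemma pf_eq_self {σ : Equiv.Perm (Fin N)} (h : ¬ ∃ n, Valid σ n) : pf σ = σ := by
  rw [pf, dif_neg h]

lemma swap_mul_apply_left {σ : Equiv.Perm (Fin N)} {i₀ i₁ : Fin N} :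
    (σ * Equiv.swap i₀ i₁) i₀ = σ i₁ := by
  simp [Equiv.Perm.mul_apply]

lemma swap_mul_apply_right {σ : Equiv.Perm (Fin N)} {i₀ i₁ : Fin N} :
    (σ * Equiv.swap i₀ i₁) i₁ = σ i₀ := by
  simp [Equiv.Perm.mul_apply]

lemma swap_mul_apply_other {σ : Equiv.Perm (Fin N)} {i₀ i₁ x : Fin N}
    (h0 : x ≠ i₀) (h1 : x ≠ i₁) : (σ * Equiv.swap i₀ i₁) x = σ x := by
  simp [Equiv.Perm.mul_apply, Equiv.swap_apply_of_ne_of_ne h0 h1]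

/-- validity at the swapped position is preserved. -/
lemma valid_swap {σ : Equiv.Perm (Fin N)} {n : ℕ} {i₀ i₁ : Fin N}
    (h₀ : (i₀ : ℕ) = n) (h₁ : (i₁ : ℕ) = n + 1) (hv : Valid σ n) :
    Valid (σ * Equiv.swap i₀ i₁) n := by
  obtain ⟨a, b, j, ha, hb, hbj, h1, h2⟩ := hv
  have hai : a = i₀ := Fin.ext (by omega)
  have hbi : b = i₁ := Fin.ext (by omega)
  have hj0 : j ≠ i₀ := fun e => by rw [e] at hbj; omega
  have hj1 : j ≠ i₁ := fun e => by rw [e] at hbj; omega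
  refine ⟨i₀, i₁, j, h₀, h₁, by omega, ?_, ?_⟩
  · rw [swap_mul_apply_left, swap_mul_apply_other hj0 hj1, ← hbi]; exact h2
  · rw [swap_mul_apply_right, swap_mul_apply_other hj0 hj1, ← hai]; exact h1

/-- invalidity strictly to the left of the leftmost valid position is preserved. -/
lemma invalid_swap {σ : Equiv.Perm (Fin N)} {n m : ℕ} {i₀ i₁ : Fin N}
    (h₀ : (i₀ : ℕ) = n) (h₁ : (i₁ : ℕ) = n + 1) (hv : Valid σ n)
    (hmin : ∀ k, k < n → ¬ Valid σ k) (hm : m < n) :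
    ¬ Valid (σ * Equiv.swap i₀ i₁) m := by
  rintro ⟨a, b, j, ha, hb, hbj, h1, h2⟩
  have ha0 : a ≠ i₀ := fun e => by rw [e, h₀] at ha; omega
  have ha1 : a ≠ i₁ := fun e => by rw [e, h₁] at ha; omega
  rw [swap_mul_apply_other ha0 ha1] at h1
  rcases Nat.lt_or_ge (m + 1) n with hcase | hcase
  · -- b is also untouched; move the witness j through the swap
    have hb0 : b ≠ i₀ := fun e => by rw [e, h₀] at hb; omega
    have hb1 : b ≠ i₁ := fun e => by rw [e, h₁] at hb; omega
    rw [swap_mul_apply_other hb0 hb1] at h2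
    refine hmin m hm ⟨a, b, Equiv.swap i₀ i₁ j, ha, hb, ?_, ?_, ?_⟩
    · rcases eq_or_ne j i₀ with rfl | hj0
      · rw [Equiv.swap_apply_left, h₁]; omega
      rcases eq_or_ne j i₁ with rfl | hj1
      · rw [Equiv.swap_apply_right, h₀]
        rw [h₁] at hbj; omega
      · rw [Equiv.swap_apply_of_ne_of_ne hj0 hj1]; exact hbj
    · rwa [Equiv.Perm.mul_apply] at h1
    · rwa [Equiv.Perm.mul_apply] at h2
  · -- m + 1 = n, so b = i₀
    have hmn : m + 1 = n := by omega
    have hbi : b = i₀ := Fin.ext (by omega)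
    have h2' : (σ * Equiv.swap i₀ i₁) j < σ i₁ := by
      rw [hbi, swap_mul_apply_left] at h2; exact h2
    obtain ⟨a', b', j', ha', hb', hbj', g1, g2⟩ := hv
    have ha'i : a' = i₀ := Fin.ext (by omega)
    have hb'i : b' = i₁ := Fin.ext (by omega)
    rw [ha'i] at g1; rw [hb'i] at g2
    have hj'0 : j' ≠ i₀ := fun e => by rw [e] at hbj'; omega
    have hj'1 : j' ≠ i₁ := fun e => by rw [e] at hbj'; omega
    -- hbj' : (i₁ : ℕ) < j'
    rcases eq_or_ne j i₁ with rfl | hj1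
    · -- σ i₀ < σ a and σ i₀ < σ i₁ ; use witness j'
      rw [swap_mul_apply_right] at h1 h2'
      refine hmin m hm ⟨a, i₀, j', ha, by omega, by omega, ?_, g1⟩
      exact lt_trans g1 h1
    · have hj0 : j ≠ i₀ := fun e => by rw [e] at hbj; omega
      rw [swap_mul_apply_other hj0 hj1] at h1 h2'
      rcases lt_or_ge (σ j) (σ i₀) with hlt | hle
      · exact hmin m hm ⟨a, i₀, j, ha, by omega, by rw [hbi] at hbj; omega, h1, hlt⟩
      · refine hmin m hm ⟨a, i₀, j', ha, by omega, by omega, ?_, g1⟩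
        exact lt_trans g1 (lt_of_le_of_lt hle h1)

lemma pf_involutive {σ : Equiv.Perm (Fin N)} (h : ∃ n, Valid σ n) :
    pf (pf σ) = σ := by
  have hspec : Valid σ (Nat.find h) := Nat.find_spec h
  have hb : Nat.find h + 1 < N := hspec.bound
  set i₀ : Fin N := ⟨Nat.find h, by omega⟩ with hi₀
  set i₁ : Fin N := ⟨Nat.find h + 1, hb⟩ with hi₁
  have hpf : pf σ = σ * Equiv.swap i₀ i₁ := pf_eq h rfl rfl
  have hv' : Valid (σ * Equiv.swap i₀ i₁) (Nat.find h) := valid_swap rfl rfl hspec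
  have h' : ∃ m, Valid (σ * Equiv.swap i₀ i₁) m := ⟨Nat.find h, hv'⟩
  have hfind' : Nat.find h' = Nat.find h := by
    refine le_antisymm (Nat.find_le hv') ?_
    by_contra hlt
    push_neg at hlt
    exact invalid_swap rfl rfl hspec (fun k hk => Nat.find_min h hk)
      hlt (Nat.find_spec h')
  rw [hpf, pf_eq h' (i₀ := i₀) (i₁ := i₁) (by rw [hfind']) (by rw [hfind'])]
  rw [mul_assoc, Equiv.swap_mul_self, mul_one]

lemma pf_ne {σ : Equiv.Perm (Fin N)} (h : ∃ n, Valid σ n) : pf σ ≠ σ := by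
  have hb : Nat.find h + 1 < N := (Nat.find_spec h).bound
  set i₀ : Fin N := ⟨Nat.find h, by omega⟩
  set i₁ : Fin N := ⟨Nat.find h + 1, hb⟩
  have hpf : pf σ = σ * Equiv.swap i₀ i₁ := pf_eq h rfl rfl
  intro e
  have e0 : σ i₁ = σ i₀ := by
    have := congrArg (fun τ : Equiv.Perm (Fin N) => τ i₀) e
    simpa [hpf, swap_mul_apply_left] using this
  have : i₁ = i₀ := σ.injective e0
  have := congrArg Fin.val this
  simp [i₀, i₁] at this

/-- an adjacent transposition has no valid position. -/
lemma adj_swap_no_valid {i₀ i₁ : Fin N} (h₁ : (i₁ : ℕ) = (i₀ : ℕ) + 1) (n : ℕ) :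
    ¬ Valid (Equiv.swap i₀ i₁) n := by
  rintro ⟨a, b, j, ha, hb, hbj, h1, h2⟩
  have key : ∀ x : Fin N, (x : ℕ) ≤ (Equiv.swap i₀ i₁ x : ℕ) + 1 ∧
      (Equiv.swap i₀ i₁ x : ℕ) ≤ (x : ℕ) + 1 := by
    intro x
    rcases eq_or_ne x i₀ with rfl | h0
    · rw [Equiv.swap_apply_left]; omega
    rcases eq_or_ne x i₁ with rfl | h1'
    · rw [Equiv.swap_apply_right]; omega
    · rw [Equiv.swap_apply_of_ne_of_ne h0 h1']; omega
  have k1 := key j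
  have k2 := key a
  rw [Fin.lt_def] at h1
  omega

lemma pf_ne_one {σ : Equiv.Perm (Fin N)} (hσ : σ ≠ 1) : pf σ ≠ 1 := by
  by_cases h : ∃ n, Valid σ n
  · intro e
    have hb := (Nat.find_spec h).bound
    set i₀ : Fin N := ⟨Nat.find h, by omega⟩
    set i₁ : Fin N := ⟨Nat.find h + 1, hb⟩
    have hpf : pf σ = σ * Equiv.swap i₀ i₁ := pf_eq h rfl rfl
    have hσswap : σ = Equiv.swap i₀ i₁ := by
      have h2 : σ * Equiv.swap i₀ i₁ * Equiv.swap i₀ i₁ = Equiv.swap i₀ i₁ := by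
        rw [← hpf, e, one_mul]
      rwa [mul_assoc, Equiv.swap_mul_self, mul_one] at h2
    obtain ⟨nf, hnf⟩ : ∃ nf, Valid σ nf := ⟨Nat.find h, Nat.find_spec h⟩
    rw [hσswap] at hnf
    exact adj_swap_no_valid rfl nf hnf
  · rw [pf_eq_self h]; exact hσ

lemma single_of_no_valid {σ : Equiv.Perm (Fin N)} (hσ : σ ≠ 1)
    (h : ¬ ∃ n, Valid σ n) : SingleType σ := by
  have hS : (Finset.univ.filter (fun x : Fin N => σ x ≠ x)).Nonempty := by
    by_contra hne
    rw [Finset.not_nonempty_iff_eq_empty, Finset.filter_eq_empty_iff] at hne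
    exact hσ (Equiv.ext fun x => by
      simpa using not_not.mp (hne (Finset.mem_univ x)))
  set S := Finset.univ.filter (fun x : Fin N => σ x ≠ x) with hSdef
  set p := S.min' hS with hpdef
  have hpS : p ∈ S := S.min'_mem hS
  have hpne : σ p ≠ p := (Finset.mem_filter.1 hpS).2
  have hfix : ∀ x : Fin N, x < p → σ x = x := by
    intro x hx
    by_contra hxne
    exact absurd (S.min'_le x (Finset.mem_filter.2 ⟨Finset.mem_univ x, hxne⟩))
      (not_le.2 hx)
  set p' := σ⁻¹ p with hp'def
  have hp'v : σ p' = p := Equiv.apply_symm_apply σ p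
  have hpp' : p < p' := by
    rcases lt_trichotomy p' p with hlt | he | hgt'
    · have hfx := hfix p' hlt
      rw [hp'v] at hfx
      exact absurd hfx.symm (ne_of_lt hlt)
    · rw [he] at hp'v; exact absurd hp'v hpne
    · exact hgt'
  have hbig : ∀ k : Fin N, p ≤ k → k ≠ p' → p < σ k := by
    intro k hk hk'
    rcases lt_trichotomy (σ k) p with hlt | he | hgt'
    · have hfx := hfix (σ k) hlt
      have hkk := σ.injective hfx
      rw [hkk] at hlt
      exact absurd hk (not_le.2 hlt)
    · exact absurd (σ.injective (he.trans hp'v.symm)) hk'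
    · exact hgt'
  by_cases hcase : (p' : ℕ) = (p : ℕ) + 1
  · exact ⟨p', p, hcase, hp'v,
      fun k hk => hbig k (le_of_lt (lt_trans hpp' hk)) (ne_of_gt hk)⟩
  · exfalso
    apply h
    have h2 : (p : ℕ) + 2 ≤ (p' : ℕ) := by
      have := Fin.lt_def.1 hpp'; omega
    have l2 : (p' : ℕ) - 2 < N := by have := p'.isLt; omega
    have l1 : (p' : ℕ) - 1 < N := by have := p'.isLt; omega
    refine ⟨(p' : ℕ) - 2, ⟨(p' : ℕ) - 2, l2⟩, ⟨(p' : ℕ) - 1, l1⟩, p', rfl,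
      show (p' : ℕ) - 1 = (p' : ℕ) - 2 + 1 by omega,
      show (p' : ℕ) - 1 < (p' : ℕ) by omega, ?_, ?_⟩
    · rw [hp'v]
      exact hbig _ (by rw [Fin.le_def]; simp only [Fin.val_mk]; omega)
        (by intro e; have := congrArg Fin.val e; simp only [Fin.val_mk] at this; omega)
    · rw [hp'v]
      exact hbig _ (by rw [Fin.le_def]; simp only [Fin.val_mk]; omega)
        (by intro e; have := congrArg Fin.val e; simp only [Fin.val_mk] at this; omega)

lemma blk_eq_of_mem {σ τ : Equiv.Perm (Fin N)}
    (hτ : τ ∈ ({σ, pf σ} : Finset (Equiv.Perm (Fin N)))) :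
    ({τ, pf τ} : Finset (Equiv.Perm (Fin N))) = {σ, pf σ} := by
  rcases Finset.mem_insert.1 hτ with rfl | hτ'
  · rfl
  · rw [Finset.mem_singleton] at hτ'
    subst hτ'
    by_cases h : ∃ n, Valid σ n
    · rw [pf_involutive h]; exact Finset.pair_comm _ _
    · simp only [pf_eq_self h]

end PermPartitionAux

open PermPartitionAux in
theorem perm_partition (N : ℕ) (hN : 2 ≤ N) :
    ∃ P : Finset (Finset (Equiv.Perm (Fin N))),
      (∀ B ∈ P, ∀ B' ∈ P, B ≠ B' → Disjoint B B') ∧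
      P.biUnion id = Finset.univ.erase 1 ∧
      ∀ B ∈ P,
        (∃ σ, B = {σ} ∧ SingleType σ) ∨
        (∃ σ σ', σ ≠ σ' ∧ B = {σ, σ'} ∧ PairType σ σ') := by
  classical
  refine ⟨(Finset.univ.erase (1 : Equiv.Perm (Fin N))).image
      (fun σ => ({σ, pf σ} : Finset (Equiv.Perm (Fin N)))), ?_, ?_, ?_⟩
  · intro B hB B' hB' hne
    rw [Finset.mem_image] at hB hB'
    obtain ⟨σ, -, rfl⟩ := hB
    obtain ⟨σ', -, rfl⟩ := hB'
    rw [Finset.disjoint_left]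
    intro x hx hx'
    exact hne ((blk_eq_of_mem hx).symm.trans (blk_eq_of_mem hx'))
  · ext τ
    simp only [Finset.mem_biUnion, Finset.mem_image, id_eq, Finset.mem_erase,
      Finset.mem_univ, and_true]
    constructor
    · rintro ⟨B, ⟨σ, hσ, rfl⟩, hτB⟩
      rcases Finset.mem_insert.1 hτB with rfl | hτ'
      · exact hσ
      · rw [Finset.mem_singleton] at hτ'
        subst hτ'
        exact pf_ne_one hσ
    · intro hτ
      exact ⟨{τ, pf τ}, ⟨τ, hτ, rfl⟩, Finset.mem_insert_self _ _⟩
  · intro B hB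
    rw [Finset.mem_image] at hB
    obtain ⟨σ, hσ, rfl⟩ := hB
    rw [Finset.mem_erase] at hσ
    by_cases h : ∃ n, Valid σ n
    · right
      refine ⟨σ, pf σ, (pf_ne h).symm, rfl, ?_⟩
      obtain ⟨a, b, j, ha, hb, hbj, h1, h2⟩ := Nat.find_spec h
      exact ⟨a, b, j, by omega, pf_eq h ha hb, hbj, h1, h2⟩
    · left
      refine ⟨σ, ?_, single_of_no_valid hσ.1 h⟩
      ext x; simp [pf_eq_self h]
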